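/- For the complete graph K_n on n ≥ 2 vertices, the total transitivity satisfies Tr_t(K_n) = ⌊n/2⌋. -/
import Mathlib


/-- A total transitive partition of `G` into `k` parts: the parts are nonempty, they
partition the vertex set, and `V_i` dominates `V_j` for all `i ≤ j`. -/
def TTPartition {V : Type*} (G : SimpleGraph V) (k : ℕ) (P : Fin k → Set V) : Prop :=
  (∀ i, (P i).Nonempty) ∧
  (∀ v : V, ∃! i, v ∈ P i) ∧
  (∀ i j : Fin k, i ≤ j → ∀ v ∈ P j, ∃ u ∈ P i, G.Adj u v)

/-- The total transitivity of the complete graph `K_n` (for `n ≥ 2`) equals `⌊n/2⌋`. -/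
theorem stmt1 (n : ℕ) (hn : 2 ≤ n) :
    IsGreatest {k : ℕ | ∃ P : Fin k → Set (Fin n),
      TTPartition (⊤ : SimpleGraph (Fin n)) k P} (n / 2) := by
  classical
  constructor
  · -- membership: a construction with n/2 parts
    set k := n / 2 with hk
    have hk1 : 1 ≤ k := by omega
    refine ⟨fun i => {v : Fin n | min ((v : ℕ) / 2) (k - 1) = (i : ℕ)}, ?_, ?_, ?_⟩
    · intro i
      have hi : (i : ℕ) < k := i.isLt
      exact ⟨⟨2 * i, by omega⟩, by simp only [Set.mem_setOf_eq, Fin.val_mk]; omega⟩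
    · intro v
      refine ⟨⟨min ((v : ℕ) / 2) (k - 1), by omega⟩, by simp, ?_⟩
      intro j hj
      simp only [Set.mem_setOf_eq, Fin.val_mk] at hj
      exact Fin.ext (by simp only [Fin.val_mk]; omega)
    · intro i j hij v hv
      have hi : (i : ℕ) < k := i.isLt
      have h2 : 2 * (i : ℕ) + 1 < n := by omega
      by_cases hvu : (v : ℕ) = 2 * (i : ℕ)
      · refine ⟨⟨2 * i + 1, h2⟩, by simp only [Set.mem_setOf_eq, Fin.val_mk]; omega, ?_⟩
        simp only [SimpleGraph.top_adj]
        exact Fin.ne_of_val_ne (by simp only [Fin.val_mk]; omega)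
      · refine ⟨⟨2 * i, by omega⟩, by simp only [Set.mem_setOf_eq, Fin.val_mk]; omega, ?_⟩
        simp only [SimpleGraph.top_adj]
        exact Fin.ne_of_val_ne (by simp only [Fin.val_mk]; omega)
  · -- upper bound
    rintro k ⟨P, hne, huniq, hdom⟩
    choose g hg hg' using huniq
    have hcard : ∀ i : Fin k,
        2 ≤ (Finset.univ.filter (fun v => g v = i)).card := by
      intro i
      obtain ⟨v, hv⟩ := hne i
      obtain ⟨u, hu, hadj⟩ := hdom i i le_rfl v hv
      have hgv : g v = i := (hg' v i hv).symm
      have hgu : g u = i := (hg' u i hu).symm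
      have huv : u ≠ v := hadj.ne
      rw [Nat.succ_le_iff]
      rw [Finset.one_lt_card]
      exact ⟨u, by simp [hgu], v, by simp [hgv], huv⟩
    have hsum : (Finset.univ : Finset (Fin n)).card =
        ∑ i : Fin k, (Finset.univ.filter (fun v => g v = i)).card :=
      Finset.card_eq_sum_card_fiberwise (fun v _ => Finset.mem_univ (g v))
    have h2k : 2 * k ≤ n := by
      calc 2 * k = ∑ _i : Fin k, 2 := by simp [mul_comm]
        _ ≤ ∑ i : Fin k, (Finset.univ.filter (fun v => g v = i)).card :=
            Finset.sum_le_sum (fun i _ => hcard i)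
        _ = n := by rw [← hsum, Finset.card_univ, Fintype.card_fin]
    omega
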